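/- Suppose w ∈ A₁^loc on ℝⁿ and let B be a ball of radius 1/2. Then there is a constant c(n) > 0 such that for all t ≥ 1, ∫_{(t+1/2)B} w dy ≤ (c(n)[w]_{A₁^loc} + 1) ∫_{tB} w dy, where λB denotes the ball concentric with B of radius λ/2. Consequently ∫_{tB} w dy grows at most geometrically in t. -/

import Mathlib

open MeasureTheory Set ENNReal Filter Metric

private theorem geom_lemma' {n : ℕ} (z y : EuclideanSpace ℝ (Fin n)) (t : ℝ) (ht : 1 ≤ t)
    (h1 : dist y z < (t + 1/2) / 2) (h2 : t / 2 ≤ dist y z) :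
    Metric.ball (y + ((3/8) / dist y z) • (z - y)) (1/8) ⊆
      Metric.ball z (t/2) ∩ Metric.ball y (1/2) := by
  set d := dist y z with hd
  have hd2 : (1:ℝ)/2 ≤ d := by linarith
  have hd0 : d ≠ 0 := by positivity
  set p := y + ((3/8) / d) • (z - y) with hp
  have hnz : ‖z - y‖ = d := by rw [← dist_eq_norm, dist_comm]
  have hpy : dist p y = 3/8 := by
    rw [dist_eq_norm]
    have : p - y = ((3/8)/d) • (z - y) := by rw [hp]; abel
    rw [this, norm_smul, hnz, Real.norm_eq_abs, abs_div]
    rw [abs_of_nonneg (by norm_num), abs_of_nonneg (by positivity)]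
    field_simp
  have hpz : dist p z = d - 3/8 := by
    rw [dist_eq_norm]
    have : p - z = (1 - (3/8)/d) • (y - z) := by
      rw [hp, sub_smul, one_smul, smul_sub, smul_sub]
      abel
    have hnz' : ‖y - z‖ = d := by rw [← dist_eq_norm]
    rw [this, norm_smul, hnz', Real.norm_eq_abs]
    have hle : (3/8)/d ≤ 3/4 := by
      rw [div_le_iff₀ (by positivity)]; linarith
    rw [abs_of_nonneg (by linarith)]
    field_simp
  intro u hu
  have hup : dist u p < 1/8 := mem_ball.mp hu
  constructor
  · have : dist u z < 1/8 + (d - 3/8) := by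
      calc dist u z ≤ dist u p + dist p z := dist_triangle u p z
        _ < 1/8 + (d - 3/8) := by rw [hpz]; linarith
    exact mem_ball.mpr (by linarith)
  · have hh : dist u y ≤ dist u p + dist p y := dist_triangle u p y
    exact mem_ball.mpr (by rw [hpy] at hh; linarith)

theorem A1loc_geometric_growth (n : ℕ) :
    ∃ c : ℝ, 0 < c ∧
      ∀ (w : EuclideanSpace ℝ (Fin n) → ℝ) (cw : ℝ), 0 ≤ cw →
        (∀ x, 0 ≤ w x) → MeasureTheory.LocallyIntegrable w volume →
        (∀ᵐ x ∂(volume : Measure (EuclideanSpace ℝ (Fin n))),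
          ∀ r : ℝ, 0 < r → r ≤ 1 → ⨍ y in Metric.ball x r, w y ≤ cw * w x) →
        ∀ (z : EuclideanSpace ℝ (Fin n)) (t : ℝ), 1 ≤ t →
          (∫ y in Metric.ball z ((t + 1/2) / 2), w y)
            ≤ (c * cw + 1) * ∫ y in Metric.ball z (t / 2), w y := by
  refine ⟨4^n, by positivity, ?_⟩
  intro w cw hcw hwnn hloc hA1 z t ht
  -- pass to a measurable nonnegative representative v of w
  obtain ⟨v, hvmeas, hvnn, hvw⟩ : ∃ v : EuclideanSpace ℝ (Fin n) → ℝ,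
      Measurable v ∧ (∀ x, 0 ≤ v x) ∧ v =ᵐ[(volume : Measure (EuclideanSpace ℝ (Fin n)))] w := by
    have h := hloc.aestronglyMeasurable
    refine ⟨fun x => max (h.mk w x) 0,
      (h.stronglyMeasurable_mk.measurable).max measurable_const,
      fun x => le_max_right _ _, ?_⟩
    filter_upwards [h.ae_eq_mk] with x hx
    rw [← hx]
    exact max_eq_left (hwnn x)
  have hIntOn : ∀ (x : EuclideanSpace ℝ (Fin n)) (r : ℝ),
      IntegrableOn v (Metric.ball x r) volume := by
    intro x r
    have hw : IntegrableOn w (Metric.ball x r) volume :=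
      (hloc.integrableOn_isCompact (isCompact_closedBall x r)).mono_set
        Metric.ball_subset_closedBall
    exact hw.congr (ae_restrict_of_ae hvw.symm)
  have hIeq : ∀ s : Set (EuclideanSpace ℝ (Fin n)),
      (∫ y in s, w y) = ∫ y in s, v y :=
    fun s => integral_congr_ae (ae_restrict_of_ae hvw.symm)
  set S := Metric.ball z (t/2) with hSdef
  set Bg := Metric.ball z ((t + 1/2) / 2) with hBgdef
  have hSB : S ⊆ Bg := Metric.ball_subset_ball (by linarith)
  set A := Bg \ S with hAdef
  have hSm : MeasurableSet S := measurableSet_ball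
  have hAm : MeasurableSet A := measurableSet_ball.diff hSm
  set g : EuclideanSpace ℝ (Fin n) → ℝ≥0∞ := fun y => ENNReal.ofReal (v y) with hgdef
  have hg : Measurable g := ENNReal.measurable_ofReal.comp hvmeas
  set vol8 := volume (Metric.ball (0 : EuclideanSpace ℝ (Fin n)) (1/8)) with hvol8
  set vol2 := volume (Metric.ball (0 : EuclideanSpace ℝ (Fin n)) (1/2)) with hvol2
  have h8pos : vol8 ≠ 0 := (measure_ball_pos volume _ (by norm_num)).ne'
  have h8top : vol8 ≠ ∞ := measure_ball_lt_top.ne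
  have h2top : vol2 ≠ ∞ := measure_ball_lt_top.ne
  -- the local A₁ bound for v, in lintegral form
  have key : ∀ᵐ x ∂(volume : Measure (EuclideanSpace ℝ (Fin n))),
      ∫⁻ y in Metric.ball x (1/2), g y ≤ ENNReal.ofReal (cw * v x) * vol2 := by
    filter_upwards [hA1, hvw] with x hx hvx
    have havg : ⨍ y in Metric.ball x (1/2), w y ≤ cw * w x :=
      hx (1/2) (by norm_num) (by norm_num)
    have havgv : ⨍ y in Metric.ball x (1/2), v y ≤ cw * v x := by
      rw [average_congr (ae_restrict_of_ae hvw), hvx]; exact havg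
    have hμB : volume (Metric.ball x (1/2)) = vol2 :=
      Measure.addHaar_ball_center volume x (1/2)
    have hpos : 0 < (volume (Metric.ball x (1/2))).toReal :=
      ENNReal.toReal_pos (measure_ball_pos volume x (by norm_num)).ne'
        measure_ball_lt_top.ne
    have hInt : (∫ y in Metric.ball x (1/2), v y)
        ≤ cw * v x * (volume (Metric.ball x (1/2))).toReal := by
      rw [setAverage_eq, smul_eq_mul, measureReal_def] at havgv
      have h2 := mul_le_mul_of_nonneg_left havgv hpos.le
      rw [← mul_assoc, mul_inv_cancel₀ hpos.ne', one_mul] at h2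
      linarith [h2]
    calc ∫⁻ y in Metric.ball x (1/2), g y
        = ENNReal.ofReal (∫ y in Metric.ball x (1/2), v y) :=
          (ofReal_integral_eq_lintegral_ofReal (hIntOn x (1/2))
            (Eventually.of_forall hvnn)).symm
      _ ≤ ENNReal.ofReal (cw * v x * (volume (Metric.ball x (1/2))).toReal) :=
          ENNReal.ofReal_le_ofReal hInt
      _ = ENNReal.ofReal (cw * v x) * ENNReal.ofReal ((volume (Metric.ball x (1/2))).toReal) :=
          ENNReal.ofReal_mul (mul_nonneg hcw (hvnn x))
      _ = ENNReal.ofReal (cw * v x) * volume (Metric.ball x (1/2)) := by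
          rw [ENNReal.ofReal_toReal measure_ball_lt_top.ne]
      _ = ENNReal.ofReal (cw * v x) * vol2 := by rw [hμB]
  -- the kernel
  set F : EuclideanSpace ℝ (Fin n) × EuclideanSpace ℝ (Fin n) → ℝ≥0∞ :=
    fun p => if dist p.1 p.2 < 1/2 then g p.2 else 0 with hFdef
  have hFm : Measurable F := by
    have hopen : IsOpen {p : EuclideanSpace ℝ (Fin n) × EuclideanSpace ℝ (Fin n) |
        dist p.1 p.2 < 1/2} :=
      isOpen_lt (continuous_fst.dist continuous_snd) continuous_const
    exact Measurable.ite hopen.measurableSet (hg.comp measurable_snd) measurable_const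
  have hinner1 : ∀ y : EuclideanSpace ℝ (Fin n),
      ∫⁻ x in S, F (x, y) = g y * volume (Metric.ball y (1/2) ∩ S) := by
    intro y
    have heq : (fun x => F (x, y)) = (Metric.ball y (1/2)).indicator (fun _ => g y) := by
      funext x
      by_cases h : x ∈ Metric.ball y (1/2)
      · simp only [hFdef]
        rw [indicator_of_mem h, if_pos (Metric.mem_ball.mp h)]
      · have hnd : ¬ dist x y < 1/2 := fun hc => h (Metric.mem_ball.mpr hc)
        simp only [hFdef]
        rw [indicator_of_notMem h, if_neg hnd]
    rw [heq, lintegral_indicator measurableSet_ball,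
      Measure.restrict_restrict measurableSet_ball]
    simp [lintegral_const]
  have hinner2 : ∀ x : EuclideanSpace ℝ (Fin n),
      ∫⁻ y in A, F (x, y) ≤ ∫⁻ y in Metric.ball x (1/2), g y := by
    intro x
    have heq : (fun y => F (x, y)) = (Metric.ball x (1/2)).indicator g := by
      funext y
      by_cases h : y ∈ Metric.ball x (1/2)
      · have hdx : dist x y < 1/2 := by rw [dist_comm]; exact Metric.mem_ball.mp h
        simp only [hFdef]
        rw [indicator_of_mem h, if_pos hdx]
      · have hnd : ¬ dist x y < 1/2 := fun hc =>
          h (Metric.mem_ball.mpr (by rw [dist_comm]; exact hc))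
        simp only [hFdef]
        rw [indicator_of_notMem h, if_neg hnd]
    rw [heq, lintegral_indicator measurableSet_ball,
      Measure.restrict_restrict measurableSet_ball]
    exact lintegral_mono' (Measure.restrict_mono inter_subset_left le_rfl) (le_refl g)
  have hgeom : ∀ y ∈ A, vol8 ≤ volume (Metric.ball y (1/2) ∩ S) := by
    intro y hy
    have h1 : dist y z < (t + 1/2) / 2 := Metric.mem_ball.mp hy.1
    have h2 : t/2 ≤ dist y z := le_of_not_gt (fun h => hy.2 (Metric.mem_ball.mpr h))
    have hsub := geom_lemma' z y t ht h1 h2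
    calc vol8 = volume (Metric.ball (y + ((3/8) / dist y z) • (z - y)) (1/8)) :=
          (Measure.addHaar_ball_center volume _ _).symm
      _ ≤ volume (Metric.ball z (t/2) ∩ Metric.ball y (1/2)) := measure_mono hsub
      _ = volume (Metric.ball y (1/2) ∩ S) := by rw [inter_comm, hSdef]
  have hratio : vol2 ≤ ENNReal.ofReal (4^n) * vol8 := by
    rw [hvol2, hvol8,
      Measure.addHaar_ball_of_pos volume (0 : EuclideanSpace ℝ (Fin n))
        (by norm_num : (0:ℝ) < 1/2),
      Measure.addHaar_ball_of_pos volume (0 : EuclideanSpace ℝ (Fin n))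
        (by norm_num : (0:ℝ) < 1/8),
      finrank_euclideanSpace_fin, ← mul_assoc,
      ← ENNReal.ofReal_mul (by positivity)]
    have hcomp : (4:ℝ)^n * (1/8)^n = (1/2)^n := by
      rw [← mul_pow]; norm_num
    rw [hcomp]
  -- main chain
  have main : vol8 * ∫⁻ y in A, g y
      ≤ vol8 * (ENNReal.ofReal (4^n) * (ENNReal.ofReal cw * ∫⁻ x in S, g x)) := by
    calc vol8 * ∫⁻ y in A, g y
        = ∫⁻ y in A, g y * vol8 := by rw [lintegral_mul_const _ hg, mul_comm]
      _ ≤ ∫⁻ y in A, g y * volume (Metric.ball y (1/2) ∩ S) := by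
          apply lintegral_mono_ae
          filter_upwards [ae_restrict_mem hAm] with y hy
          exact mul_le_mul_right (hgeom y hy) _
      _ = ∫⁻ y in A, ∫⁻ x in S, F (x, y) := lintegral_congr fun y => (hinner1 y).symm
      _ = ∫⁻ x in S, ∫⁻ y in A, F (x, y) :=
          lintegral_lintegral_swap ((hFm.comp measurable_swap).aemeasurable)
      _ ≤ ∫⁻ x in S, ENNReal.ofReal (cw * v x) * vol2 := by
          apply lintegral_mono_ae
          filter_upwards [ae_restrict_of_ae key] with x hx
          exact le_trans (hinner2 x) hx
      _ = (∫⁻ x in S, ENNReal.ofReal (cw * v x)) * vol2 :=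
          lintegral_mul_const _ (ENNReal.measurable_ofReal.comp (hvmeas.const_mul cw))
      _ = (ENNReal.ofReal cw * ∫⁻ x in S, g x) * vol2 := by
          simp_rw [ENNReal.ofReal_mul hcw]
          rw [lintegral_const_mul _ hg]
      _ ≤ (ENNReal.ofReal cw * ∫⁻ x in S, g x) * (ENNReal.ofReal (4^n) * vol8) :=
          mul_le_mul_right hratio _
      _ = vol8 * (ENNReal.ofReal (4^n) * (ENNReal.ofReal cw * ∫⁻ x in S, g x)) := by
          ring
  have hAle : ∫⁻ y in A, g y
      ≤ ENNReal.ofReal (4^n) * (ENNReal.ofReal cw * ∫⁻ x in S, g x) :=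
    (ENNReal.mul_le_mul_iff_right h8pos h8top).mp main
  have hS_lint : ∫⁻ x in S, g x = ENNReal.ofReal (∫ x in S, v x) :=
    (ofReal_integral_eq_lintegral_ofReal (hIntOn z (t/2))
      (Eventually.of_forall hvnn)).symm
  have hB_lint : ∫⁻ x in Bg, g x = ENNReal.ofReal (∫ x in Bg, v x) :=
    (ofReal_integral_eq_lintegral_ofReal (hIntOn z ((t + 1/2)/2))
      (Eventually.of_forall hvnn)).symm
  have hsplit : ∫⁻ x in Bg, g x = (∫⁻ x in S, g x) + ∫⁻ y in A, g y := by
    conv_lhs => rw [← union_diff_cancel hSB]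
    exact lintegral_union hAm disjoint_sdiff_right
  have hfinal : ENNReal.ofReal (∫ x in Bg, v x)
      ≤ ENNReal.ofReal ((4^n * cw + 1) * ∫ x in S, v x) := by
    rw [← hB_lint, hsplit]
    calc (∫⁻ x in S, g x) + ∫⁻ y in A, g y
        ≤ (∫⁻ x in S, g x) + ENNReal.ofReal (4^n) * (ENNReal.ofReal cw * ∫⁻ x in S, g x) :=
          add_le_add_right hAle _
      _ = (1 + ENNReal.ofReal (4^n) * ENNReal.ofReal cw) * ∫⁻ x in S, g x := by ring
      _ = ENNReal.ofReal ((4:ℝ)^n * cw + 1) * ∫⁻ x in S, g x := by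
          rw [← ENNReal.ofReal_mul (by positivity : (0:ℝ) ≤ 4^n),
            ENNReal.ofReal_add (by positivity) (by norm_num : (0:ℝ) ≤ 1),
            ENNReal.ofReal_one, add_comm]
      _ = ENNReal.ofReal ((4:ℝ)^n * cw + 1) * ENNReal.ofReal (∫ x in S, v x) := by
          rw [hS_lint]
      _ = ENNReal.ofReal ((4^n * cw + 1) * ∫ x in S, v x) :=
          (ENNReal.ofReal_mul (by positivity)).symm
  have hrhs_nn : 0 ≤ (4^n * cw + 1) * ∫ x in S, v x :=
    mul_nonneg (by positivity) (setIntegral_nonneg hSm fun x _ => hvnn x)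
  rw [hIeq, hIeq]
  exact (ENNReal.ofReal_le_ofReal_iff hrhs_nn).mp hfinal
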